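/- Let $f\in C_c^2(\mathbb{R}_+\times\mathbb{R}^d)$ be real-valued and let $\mu$ be a $\sigma$-finite measure on $\mathbb{R}_+\times\mathbb{R}^d$ with $\int\|\xi\|^2\,\mu(d\xi)<\infty$. Then $\lim_{\theta\to\infty}\sup_{x=(x_1,x_2)\in\mathbb{R}_+\times\mathbb{R}^d} x_1\Big|\int\big(f(x+\theta^{-1}\xi)-f(x)-\theta^{-1}\langle f'(x),\xi\rangle-\tfrac{1}{2}\theta^{-2}\langle f''(x)\xi,\xi\rangle\big)\theta^2\,\mu(d\xi)\Big|=0$. -/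

import Mathlib

set_option maxHeartbeats 1000000
set_option synthInstance.maxHeartbeats 400000

section AuxLemmas
open Set

variable {V : Type*} [NormedAddCommGroup V] [NormedSpace ℝ V]


lemma aux_mvt (φ ψ : ℝ → ℝ) (hφ : ∀ t ∈ Icc (0:ℝ) 1, HasDerivAt φ (ψ t) t)
    {C : ℝ} (hb : ∀ t ∈ Icc (0:ℝ) 1, |ψ t| ≤ C) :
    |φ 1 - φ 0| ≤ C := by
  have := Convex.norm_image_sub_le_of_norm_hasDerivWithin_le
    (f := φ) (f' := ψ) (s := Icc (0:ℝ) 1)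
    (fun t ht => (hφ t ht).hasDerivWithinAt) hb (convex_Icc 0 1)
    (Set.left_mem_Icc.2 zero_le_one) (Set.right_mem_Icc.2 zero_le_one)
  simpa using this

lemma aux_taylor2 (φ ψ χ : ℝ → ℝ)
    (hφ : ∀ t ∈ Icc (0:ℝ) 1, HasDerivAt φ (ψ t) t)
    (hψ : ∀ t ∈ Icc (0:ℝ) 1, HasDerivAt ψ (χ t) t)
    {C : ℝ} (hb : ∀ t ∈ Icc (0:ℝ) 1, |χ t| ≤ C) :
    |φ 1 - φ 0 - ψ 0| ≤ C := by
  have hC0 : 0 ≤ C := le_trans (abs_nonneg _) (hb 0 (Set.left_mem_Icc.2 zero_le_one))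
  have h1 : ∀ t ∈ Icc (0:ℝ) 1, |ψ t - ψ 0| ≤ C := by
    intro t ht
    have := Convex.norm_image_sub_le_of_norm_hasDerivWithin_le
      (f := ψ) (f' := χ) (s := Icc (0:ℝ) 1)
      (fun u hu => (hψ u hu).hasDerivWithinAt) hb (convex_Icc 0 1)
      (Set.left_mem_Icc.2 zero_le_one) ht
    have h2 : ‖t - 0‖ ≤ 1 := by
      rw [Real.norm_eq_abs]; rw [abs_of_nonneg (by simpa using ht.1)]; simpa using ht.2
    calc |ψ t - ψ 0| ≤ C * ‖t - 0‖ := this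
      _ ≤ C * 1 := by nlinarith
      _ = C := mul_one C
  have := aux_mvt (fun t => φ t - t * ψ 0) (fun t => ψ t - ψ 0)
    (fun t ht => (hφ t ht).sub (hasDerivAt_mul_const (ψ 0))) h1
  have h3 : φ 1 - 1 * ψ 0 - (φ 0 - 0 * ψ 0) = φ 1 - φ 0 - ψ 0 := by ring
  rw [h3] at this; exact this




lemma line_d1 (f : ℝ × V → ℝ) (hf : ContDiff ℝ 2 f) (x h : ℝ × V) (t : ℝ) :
    HasDerivAt (fun t : ℝ => f (x + t • h)) (fderiv ℝ f (x + t • h) h) t := by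
  have hγ : HasDerivAt (fun t : ℝ => x + t • h) h t := by
    simpa using ((hasDerivAt_id t).smul_const h).const_add x
  have hfd : HasFDerivAt f (fderiv ℝ f (x + t • h)) (x + t • h) :=
    (hf.differentiable (by norm_num) _).hasFDerivAt
  exact hfd.comp_hasDerivAt t hγ

lemma line_d2 (f : ℝ × V → ℝ) (hf : ContDiff ℝ 2 f) (x h : ℝ × V) (t : ℝ) :
    HasDerivAt (fun t : ℝ => fderiv ℝ f (x + t • h) h)
      (fderiv ℝ (fderiv ℝ f) (x + t • h) h h) t := by
  have hγ : HasDerivAt (fun t : ℝ => x + t • h) h t := by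
    simpa using ((hasDerivAt_id t).smul_const h).const_add x
  have h1 : ContDiff ℝ 1 (fderiv ℝ f) := hf.fderiv_right (by norm_num)
  have hfd : HasFDerivAt (fderiv ℝ f) (fderiv ℝ (fderiv ℝ f) (x + t • h)) (x + t • h) :=
    (h1.differentiable (by norm_num) _).hasFDerivAt
  have h2 : HasDerivAt (fun t : ℝ => fderiv ℝ f (x + t • h))
      (fderiv ℝ (fderiv ℝ f) (x + t • h) h) t := hfd.comp_hasDerivAt t hγ
  have := (ContinuousLinearMap.apply ℝ ℝ h).hasFDerivAt.comp_hasDerivAt t h2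
  exact this

lemma far_arith (Mg1 M₁ Mg s ε M₂ θ : ℝ) (hθ0 : 0 < θ) (hε : 0 < ε)
    (hs0 : 0 ≤ s) (hM₂0 : 0 ≤ M₂) (hMg0 : 0 ≤ Mg) (hMg10 : 0 ≤ Mg1) :
    ∀ X : ℝ, 0 ≤ X → ε*θ ≤ X →
        ((2*Mg1 + (θ⁻¹*X)*M₁) * (θ⁻¹*X) + (1/2) * (Mg * ((θ⁻¹*X) * (θ⁻¹*X)))) * θ^2
          ≤ (s + ε*M₂) * X^2 + (2*Mg1/ε + M₁ + Mg) * X^2 := by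
  intro X hX0 hX
  have hθne : θ ≠ 0 := ne_of_gt hθ0
  have e : ((2*Mg1 + (θ⁻¹*X)*M₁) * (θ⁻¹*X) + (1/2) * (Mg * ((θ⁻¹*X) * (θ⁻¹*X)))) * θ^2
      = 2*Mg1*(X*θ) + M₁*X^2 + (1/2)*Mg*X^2 := by
    field_simp
  rw [e]
  have h2 : X*θ ≤ X^2/ε := by
    rw [le_div_iff₀ hε]
    nlinarith [mul_le_mul_of_nonneg_left hX hX0]
  have h3 : 2*Mg1*(X*θ) ≤ 2*Mg1*(X^2/ε) :=
    mul_le_mul_of_nonneg_left h2 (by linarith)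
  have h4 : 2*Mg1*(X^2/ε) = (2*Mg1/ε)*X^2 := by ring
  linarith [h3, h4, mul_nonneg hs0 (sq_nonneg X), mul_nonneg (mul_nonneg hε.le hM₂0) (sq_nonneg X),
    mul_nonneg hMg0 (sq_nonneg X)]

lemma pointwise_bound (f : ℝ × V → ℝ)
    (F1 : ℝ × V → ((ℝ × V) →L[ℝ] ℝ))
    (F2 : ℝ × V → ((ℝ × V) →L[ℝ] (ℝ × V) →L[ℝ] ℝ))
    (hd1 : ∀ (x h : ℝ × V) (t : ℝ),
      HasDerivAt (fun t : ℝ => f (x + t • h)) (F1 (x + t • h) h) t)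
    (hd2 : ∀ (x h : ℝ × V) (t : ℝ),
      HasDerivAt (fun t : ℝ => F1 (x + t • h) h) (F2 (x + t • h) h h) t)
    {M₁ M₂ Mg Mg1 s δ ε θ : ℝ}
    (hM₁ : ∀ y, ‖F1 y‖ ≤ M₁)
    (hM₂ : ∀ y, ‖F2 y‖ ≤ M₂)
    (hMg : ∀ y : ℝ × V, ‖y.1 • F2 y‖ ≤ Mg)
    (hMg1 : ∀ y : ℝ × V, ‖y.1 • F1 y‖ ≤ Mg1)
    (hg : ∀ a b : ℝ × V, dist a b < δ →
      ‖a.1 • F2 a - b.1 • F2 b‖ ≤ s)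
    (hε : 0 < ε) (hεδ : ε < δ) (hθ : 1 ≤ θ) (x ξ : ℝ × V) :
    |x.1 * ((f (x + θ⁻¹ • ξ) - f x - θ⁻¹ * F1 x ξ
        - (1/2) * θ⁻¹^2 * F2 x ξ ξ) * θ^2)|
      ≤ (s + ε*M₂) * ‖ξ‖^2
        + (2*Mg1/ε + M₁ + Mg) * Set.indicator {ξ : ℝ × V | ε*θ < ‖ξ‖} (fun ξ => ‖ξ‖^2) ξ := by
  have hθ0 : (0:ℝ) < θ := lt_of_lt_of_le one_pos hθ
  have hθ' : (0:ℝ) < θ⁻¹ := inv_pos.2 hθ0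
  set h : ℝ × V := θ⁻¹ • ξ with hh
  have hs0 : 0 ≤ s := le_trans (ContinuousLinearMap.opNorm_nonneg _) (hg x x (by simpa using lt_trans hε hεδ))
  have hM₂0 : 0 ≤ M₂ := le_trans (ContinuousLinearMap.opNorm_nonneg _) (hM₂ x)
  have hM₁0 : 0 ≤ M₁ := le_trans (ContinuousLinearMap.opNorm_nonneg _) (hM₁ x)
  have hMg0 : 0 ≤ Mg := le_trans (ContinuousLinearMap.opNorm_nonneg _) (hMg x)
  have hMg10 : 0 ≤ Mg1 := le_trans (ContinuousLinearMap.opNorm_nonneg _) (hMg1 x)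
  have hnh : ‖h‖ = θ⁻¹ * ‖ξ‖ := by
    rw [hh, norm_smul, Real.norm_eq_abs, abs_of_pos hθ']
  have e1 : θ⁻¹ * F1 x ξ = F1 x h := by
    rw [hh, map_smul]; simp
  have e2 : θ⁻¹^2 * F2 x ξ ξ = F2 x h h := by
    rw [hh, map_smul]; simp [smul_eq_mul]; ring
  have hh1 : |h.1| ≤ ‖h‖ := by
    have := norm_fst_le h
    simpa using this
  have ev2 : ∀ (L : (ℝ × V) →L[ℝ] (ℝ × V) →L[ℝ] ℝ) (a : ℝ × V), |L a a| ≤ ‖L‖ * ‖a‖ * ‖a‖ := by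
    intro L a
    rw [← Real.norm_eq_abs]
    calc ‖L a a‖ ≤ ‖L a‖ * ‖a‖ := (L a).le_opNorm a
      _ ≤ (‖L‖ * ‖a‖) * ‖a‖ :=
          mul_le_mul_of_nonneg_right (L.le_opNorm a) (norm_nonneg a)
      _ = ‖L‖ * ‖a‖ * ‖a‖ := by ring
  have ev1 : ∀ (L : (ℝ × V) →L[ℝ] ℝ) (a : ℝ × V), |L a| ≤ ‖L‖ * ‖a‖ := by
    intro L a
    rw [← Real.norm_eq_abs]
    exact L.le_opNorm a
  -- the absolute value pulls out θ^2
  have final : ∀ T : ℝ, |x.1 * (T * θ^2)| = |x.1 * T| * θ^2 := by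
    intro T
    rw [show x.1 * (T * θ^2) = (x.1 * T) * θ^2 by ring, abs_mul,
      abs_of_pos (by positivity : (0:ℝ) < θ^2)]
  by_cases hcase : ‖ξ‖ ≤ ε * θ
  · -- near case
    have hne : ξ ∉ {ξ : ℝ × V | ε*θ < ‖ξ‖} := by simp [not_lt.2 hcase]
    rw [Set.indicator_of_notMem hne, mul_zero, add_zero]
    have hhε : ‖h‖ ≤ ε := by
      rw [hnh]
      calc θ⁻¹ * ‖ξ‖ ≤ θ⁻¹ * (ε * θ) := by nlinarith [norm_nonneg ξ]
        _ = ε := by field_simp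
    have hχ : ∀ t ∈ Icc (0:ℝ) 1,
        |x.1 * (F2 (x + t • h) h h) - x.1 * (F2 x h h)| ≤ (s + ε*M₂) * (‖h‖*‖h‖) := by
      intro t ht
      set z := x + t • h with hz
      have ht0 : 0 ≤ t := ht.1
      have ht1 : t ≤ 1 := ht.2
      have hzx0 : z - x = t • h := by rw [hz]; abel
      have hzx : ‖z - x‖ = |t| * ‖h‖ := by rw [hzx0, norm_smul, Real.norm_eq_abs]
      have hdist : dist z x < δ := by
        rw [dist_eq_norm, hzx]
        calc |t| * ‖h‖ ≤ 1 * ‖h‖ := by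
              have ha := abs_le.2 ⟨by linarith, ht1⟩
              nlinarith [norm_nonneg h]
          _ = ‖h‖ := one_mul _
          _ ≤ ε := hhε
          _ < δ := hεδ
      have hz1 : z.1 = x.1 + t * h.1 := by
        rw [hz]; simp [Prod.fst_add, Prod.smul_fst, smul_eq_mul]
      have e3 : x.1 * (F2 z h h) - x.1 * (F2 x h h)
          = ((z.1 • F2 z - x.1 • F2 x) h) h - (t*h.1) * (F2 z h h) := by
        simp only [ContinuousLinearMap.sub_apply, ContinuousLinearMap.smul_apply,
          smul_eq_mul, hz1]
        ring
      have h3 : |t * h.1| ≤ ε := by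
        rw [abs_mul]
        calc |t| * |h.1| ≤ 1 * ‖h‖ := by
              have ha := abs_le.2 ⟨by linarith, ht1⟩
              nlinarith [abs_nonneg h.1, norm_nonneg h]
          _ = ‖h‖ := one_mul _
          _ ≤ ε := hhε
      have hga := hg z x hdist
      have hb1 := ev2 (z.1 • F2 z - x.1 • F2 x) h
      have hb2 := ev2 (F2 z) h
      have hb3 := hM₂ z
      rw [e3]
      calc |((z.1 • F2 z - x.1 • F2 x) h) h - (t*h.1) * (F2 z h h)|
          ≤ |((z.1 • F2 z - x.1 • F2 x) h) h| + |(t*h.1) * (F2 z h h)| := abs_sub _ _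
        _ ≤ s * (‖h‖*‖h‖) + ε * (M₂ * (‖h‖*‖h‖)) := by
            rw [abs_mul]
            have t1 : |((z.1 • F2 z - x.1 • F2 x) h) h| ≤ s * (‖h‖*‖h‖) := by
              nlinarith [norm_nonneg h, ContinuousLinearMap.opNorm_nonneg (z.1 • F2 z - x.1 • F2 x)]
            have t2 : |F2 z h h| ≤ M₂ * (‖h‖*‖h‖) := by
              nlinarith [norm_nonneg h, ContinuousLinearMap.opNorm_nonneg (F2 z)]
            have t3 : |t*h.1| * |F2 z h h| ≤ ε * (M₂ * (‖h‖*‖h‖)) :=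
              mul_le_mul h3 t2 (abs_nonneg _) hε.le
            linarith
        _ = (s + ε*M₂) * (‖h‖*‖h‖) := by ring
    have hT := aux_taylor2
      (fun t => x.1 * f (x + t • h) - t * (x.1 * (F1 x h)) - (t^2/2) * (x.1 * (F2 x h h)))
      (fun t => x.1 * (F1 (x + t • h) h) - x.1 * (F1 x h) - t * (x.1 * (F2 x h h)))
      (fun t => x.1 * (F2 (x + t • h) h h) - x.1 * (F2 x h h))
      (by
        intro t ht
        have d1 := ((hd1 x h t).const_mul x.1).sub
          (hasDerivAt_mul_const (x.1 * (F1 x h)))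
        have d2 : HasDerivAt (fun t : ℝ => (t^2/2) * (x.1 * (F2 x h h)))
            (t * (x.1 * (F2 x h h))) t := by
          have := ((hasDerivAt_pow 2 t).div_const 2).mul_const (x.1 * (F2 x h h))
          refine this.congr_deriv ?_
          norm_num
        exact d1.sub d2)
      (by
        intro t ht
        have d1 := ((hd2 x h t).const_mul x.1).sub
          (hasDerivAt_const t (x.1 * (F1 x h)))
        have d2 := hasDerivAt_mul_const (x := t) (x.1 * (F2 x h h))
        refine (d1.sub d2).congr_deriv ?_
        simp)
      hχ
    have eq0 : x.1 * (f (x + θ⁻¹ • ξ) - f x - θ⁻¹ * F1 x ξ - (1/2) * θ⁻¹^2 * F2 x ξ ξ)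
        = (x.1 * f (x + (1:ℝ) • h) - 1 * (x.1 * (F1 x h)) - ((1:ℝ)^2/2) * (x.1 * (F2 x h h)))
          - (x.1 * f (x + (0:ℝ) • h) - 0 * (x.1 * (F1 x h)) - ((0:ℝ)^2/2) * (x.1 * (F2 x h h)))
          - (x.1 * (F1 (x + (0:ℝ) • h) h) - x.1 * (F1 x h) - 0 * (x.1 * (F2 x h h))) := by
      simp only [one_smul, zero_smul, add_zero]
      rw [← e1, ← e2]
      ring
    have habs : |x.1 * (f (x + θ⁻¹ • ξ) - f x - θ⁻¹ * F1 x ξ - (1/2) * θ⁻¹^2 * F2 x ξ ξ)|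
        ≤ (s + ε*M₂) * (‖h‖*‖h‖) := by
      rw [eq0]; exact hT
    rw [final]
    have hhn : ‖h‖ * ‖h‖ = θ⁻¹^2 * ‖ξ‖^2 := by rw [hnh]; ring
    calc |x.1 * (f (x + θ⁻¹ • ξ) - f x - θ⁻¹ * F1 x ξ - (1/2) * θ⁻¹^2 * F2 x ξ ξ)| * θ^2
        ≤ ((s + ε*M₂) * (‖h‖*‖h‖)) * θ^2 :=
          mul_le_mul_of_nonneg_right habs (by positivity)
      _ = (s + ε*M₂) * ‖ξ‖^2 := by
          rw [hhn]
          field_simp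
  · -- far case
    push_neg at hcase
    have hmem : ξ ∈ {ξ : ℝ × V | ε*θ < ‖ξ‖} := hcase
    rw [Set.indicator_of_mem hmem]
    -- first-order bound on x.1 * A where A = f(x+h) - f x - F1 x h
    have hψb : ∀ t ∈ Icc (0:ℝ) 1,
        |x.1 * (F1 (x + t • h) h) - x.1 * (F1 x h)| ≤ (2*Mg1 + ‖h‖*M₁) * ‖h‖ := by
      intro t ht
      set z := x + t • h with hz
      have ht0 : 0 ≤ t := ht.1
      have ht1 : t ≤ 1 := ht.2
      have hz1 : z.1 = x.1 + t * h.1 := by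
        rw [hz]; simp [Prod.fst_add, Prod.smul_fst, smul_eq_mul]
      have e4 : x.1 * (F1 z h) - x.1 * (F1 x h)
          = ((z.1 • F1 z - x.1 • F1 x) h) - (t*h.1) * (F1 z h) := by
        simp only [ContinuousLinearMap.sub_apply, ContinuousLinearMap.smul_apply,
          smul_eq_mul, hz1]
        ring
      have h3 : |t * h.1| ≤ ‖h‖ := by
        rw [abs_mul]
        have ha := abs_le.2 ⟨by linarith, ht1⟩
        nlinarith [abs_nonneg h.1, norm_nonneg h, hh1]
      have hnrm : ‖z.1 • F1 z - x.1 • F1 x‖ ≤ 2*Mg1 := by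
        calc ‖z.1 • F1 z - x.1 • F1 x‖ ≤ ‖z.1 • F1 z‖ + ‖x.1 • F1 x‖ := norm_sub_le _ _
          _ ≤ 2*Mg1 := by have := hMg1 z; have := hMg1 x; linarith
      have hb1 := ev1 (z.1 • F1 z - x.1 • F1 x) h
      have hb2 := ev1 (F1 z) h
      have hb3 := hM₁ z
      rw [e4]
      calc |((z.1 • F1 z - x.1 • F1 x) h) - (t*h.1) * (F1 z h)|
          ≤ |((z.1 • F1 z - x.1 • F1 x) h)| + |(t*h.1) * (F1 z h)| := abs_sub _ _
        _ ≤ 2*Mg1 * ‖h‖ + ‖h‖ * (M₁ * ‖h‖) := by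
            rw [abs_mul]
            have t1 : |((z.1 • F1 z - x.1 • F1 x) h)| ≤ 2*Mg1 * ‖h‖ := by
              nlinarith [norm_nonneg h, ContinuousLinearMap.opNorm_nonneg (z.1 • F1 z - x.1 • F1 x)]
            have t2 : |F1 z h| ≤ M₁ * ‖h‖ := by
              nlinarith [norm_nonneg h, ContinuousLinearMap.opNorm_nonneg (F1 z)]
            have t3 : |t*h.1| * |F1 z h| ≤ ‖h‖ * (M₁ * ‖h‖) :=
              mul_le_mul h3 t2 (abs_nonneg _) (norm_nonneg h)
            linarith
        _ = (2*Mg1 + ‖h‖*M₁) * ‖h‖ := by ring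
    have hA := aux_mvt
      (fun t => x.1 * f (x + t • h) - t * (x.1 * (F1 x h)))
      (fun t => x.1 * (F1 (x + t • h) h) - x.1 * (F1 x h))
      (by
        intro t ht
        have d1 := ((hd1 x h t).const_mul x.1).sub
          (hasDerivAt_mul_const (x.1 * (F1 x h)))
        exact d1)
      hψb
    have hAbs : |x.1 * (f (x + h) - f x - F1 x h)| ≤ (2*Mg1 + ‖h‖*M₁) * ‖h‖ := by
      have e5 : x.1 * (f (x + h) - f x - F1 x h)
          = (x.1 * f (x + (1:ℝ) • h) - 1 * (x.1 * (F1 x h)))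
            - (x.1 * f (x + (0:ℝ) • h) - 0 * (x.1 * (F1 x h))) := by
        simp only [one_smul, zero_smul, add_zero]
        ring
      rw [e5]; exact hA
    -- second-order term
    have hF2b : |x.1 * (F2 x h h)| ≤ Mg * (‖h‖ * ‖h‖) := by
      have e6 : x.1 * (F2 x h h) = ((x.1 • F2 x) h) h := by
        simp [ContinuousLinearMap.smul_apply, smul_eq_mul]
      rw [e6]
      have := ev2 (x.1 • F2 x) h
      have := hMg x
      nlinarith [norm_nonneg h, ContinuousLinearMap.opNorm_nonneg (x.1 • F2 x)]
    -- combine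
    rw [final]
    have habs2 : |x.1 * (f (x + θ⁻¹ • ξ) - f x - θ⁻¹ * F1 x ξ - (1/2) * θ⁻¹^2 * F2 x ξ ξ)|
        ≤ (2*Mg1 + ‖h‖*M₁) * ‖h‖ + (1/2) * (Mg * (‖h‖ * ‖h‖)) := by
      have e7 : x.1 * (f (x + θ⁻¹ • ξ) - f x - θ⁻¹ * F1 x ξ - (1/2) * θ⁻¹^2 * F2 x ξ ξ)
          = x.1 * (f (x + h) - f x - F1 x h) - (1/2) * (x.1 * (F2 x h h)) := by
        rw [← e1, ← e2]; ring
      rw [e7]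
      calc |x.1 * (f (x + h) - f x - F1 x h) - (1/2) * (x.1 * (F2 x h h))|
          ≤ |x.1 * (f (x + h) - f x - F1 x h)| + |(1/2) * (x.1 * (F2 x h h))| := abs_sub _ _
        _ ≤ (2*Mg1 + ‖h‖*M₁) * ‖h‖ + (1/2) * (Mg * (‖h‖ * ‖h‖)) := by
            have t4 : |(1/2 : ℝ) * (x.1 * (F2 x h h))| ≤ (1/2) * (Mg * (‖h‖ * ‖h‖)) := by
              rw [abs_mul, show |(1/2 : ℝ)| = 1/2 by norm_num]
              linarith [hF2b]
            exact add_le_add hAbs t4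
    have gen := far_arith Mg1 M₁ Mg s ε M₂ θ hθ0 hε hs0 hM₂0 hMg0 hMg10
    rw [hnh] at habs2
    calc |x.1 * (f (x + θ⁻¹ • ξ) - f x - θ⁻¹ * F1 x ξ - (1/2) * θ⁻¹^2 * F2 x ξ ξ)| * θ^2
        ≤ ((2*Mg1 + (θ⁻¹*‖ξ‖)*M₁) * (θ⁻¹*‖ξ‖) + (1/2) * (Mg * ((θ⁻¹*‖ξ‖) * (θ⁻¹*‖ξ‖)))) * θ^2 :=
          mul_le_mul_of_nonneg_right habs2 (by positivity)
      _ ≤ (s + ε*M₂) * ‖ξ‖^2 + (2*Mg1/ε + M₁ + Mg) * ‖ξ‖^2 :=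
          gen ‖ξ‖ (norm_nonneg ξ) hcase.le


lemma main_arith (ε' I' M₂ s ε : ℝ) (hε' : 0 < ε') (hI' : 0 ≤ I') (hM₂0 : 0 ≤ M₂)
    (hs : s = ε' / (4*(I'+1))) (hεle : ε ≤ ε' / (4*(M₂+1)*(I'+1))) (hε0 : 0 < ε) :
    (s + ε*M₂) * I' < ε' := by
  have hA : (0:ℝ) < I' + 1 := by linarith
  have hB : (0:ℝ) < M₂ + 1 := by linarith
  have h1 : s * (I'+1) = ε'/4 := by rw [hs]; field_simp
  have h2 : ε * ((M₂+1)*(I'+1)) ≤ ε'/4 := by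
    calc ε * ((M₂+1)*(I'+1)) ≤ ε' / (4*(M₂+1)*(I'+1)) * ((M₂+1)*(I'+1)) :=
          mul_le_mul_of_nonneg_right hεle (le_of_lt (mul_pos hB hA))
      _ = ε'/4 := by field_simp
  have hs0 : 0 < s := by rw [hs]; positivity
  nlinarith [mul_nonneg hε0.le hM₂0, mul_pos hε0 hB, mul_nonneg (mul_nonneg hε0.le hM₂0) hI']

end AuxLemmas



open MeasureTheory Filter Topology

/-- For real-valued `f ∈ C²_c(ℝ₊ × ℝᵈ)` and a σ-finite measure `μ`
on ℝ₊ × ℝᵈ with `∫ ‖ξ‖² dμ < ∞`,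
`sup_{x=(x₁,x₂) ∈ ℝ₊×ℝᵈ} x₁ |∫ (f(x+θ⁻¹ξ) - f(x) - θ⁻¹⟨f'(x), ξ⟩
  - ½ θ⁻² ⟨f''(x) ξ, ξ⟩) θ² dμ(ξ)| → 0` as `θ → ∞`. -/
theorem uniform_limit_second_order
    {d : ℕ} (μ : Measure (ℝ × EuclideanSpace ℝ (Fin d))) [SigmaFinite μ]
    (hsupp : ∀ᵐ ξ ∂μ, 0 ≤ ξ.1)
    (hint : Integrable (fun ξ : ℝ × EuclideanSpace ℝ (Fin d) => ‖ξ‖ ^ 2) μ)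
    (f : (ℝ × EuclideanSpace ℝ (Fin d)) → ℝ)
    (hf : ContDiff ℝ 2 f) (hfc : HasCompactSupport f) :
    Tendsto
      (fun θ : ℝ =>
        ⨆ x : {x : ℝ × EuclideanSpace ℝ (Fin d) // 0 ≤ x.1},
          (x : ℝ × EuclideanSpace ℝ (Fin d)).1 *
          |∫ ξ, (f ((x : ℝ × EuclideanSpace ℝ (Fin d)) + θ⁻¹ • ξ)
              - f (x : ℝ × EuclideanSpace ℝ (Fin d))
              - θ⁻¹ * fderiv ℝ f (x : ℝ × EuclideanSpace ℝ (Fin d)) ξ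
              - (1 / 2) * θ⁻¹ ^ 2 *
                  fderiv ℝ (fderiv ℝ f) (x : ℝ × EuclideanSpace ℝ (Fin d)) ξ ξ)
            * θ ^ 2 ∂μ|)
      atTop (𝓝 0) := by
  classical
  have hf1 : ContDiff ℝ 1 (fderiv ℝ f) := hf.fderiv_right (by norm_num)
  have hc1 : Continuous (fderiv ℝ f) := hf1.continuous
  have hc2 : Continuous (fderiv ℝ (fderiv ℝ f)) := hf1.continuous_fderiv (by norm_num)
  have hs1 : HasCompactSupport (fderiv ℝ f) := hfc.fderiv ℝ
  have hs2 : HasCompactSupport (fderiv ℝ (fderiv ℝ f)) := hs1.fderiv ℝ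
  obtain ⟨M₁, hM₁⟩ := hs1.exists_bound_of_continuous hc1
  obtain ⟨M₂, hM₂⟩ : ∃ C, ∀ x, ‖fderiv ℝ (fderiv ℝ f) x‖ ≤ C := by
    obtain ⟨C, hC⟩ := IsCompact.exists_bound_of_continuousOn
      (f := fderiv ℝ (fderiv ℝ f)) hs2.isCompact hc2.continuousOn
    refine ⟨max C 0, fun x => ?_⟩
    by_cases hx : x ∈ tsupport (fderiv ℝ (fderiv ℝ f))
    · exact (hC x hx).trans (le_max_left _ _)
    · rw [image_eq_zero_of_notMem_tsupport hx, ContinuousLinearMap.opNorm_zero]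
      exact le_max_right _ _
  have hgc : Continuous
      (fun y : ℝ × EuclideanSpace ℝ (Fin d) => y.1 • fderiv ℝ (fderiv ℝ f) y) :=
    continuous_fst.smul hc2
  have hgs : HasCompactSupport
      (fun y : ℝ × EuclideanSpace ℝ (Fin d) => y.1 • fderiv ℝ (fderiv ℝ f) y) := by
    apply hs2.mono
    intro y hy
    simp only [Function.mem_support] at hy ⊢
    intro h0
    exact hy (by
      rw [h0]; exact ContinuousLinearMap.ext fun a => ContinuousLinearMap.ext fun b => by simp)
  obtain ⟨Mg, hMg⟩ : ∃ C, ∀ y : ℝ × EuclideanSpace ℝ (Fin d),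
      ‖y.1 • fderiv ℝ (fderiv ℝ f) y‖ ≤ C := by
    obtain ⟨C, hC⟩ := IsCompact.exists_bound_of_continuousOn
      (f := fun y : ℝ × EuclideanSpace ℝ (Fin d) => y.1 • fderiv ℝ (fderiv ℝ f) y)
      hgs.isCompact hgc.continuousOn
    refine ⟨max C 0, fun x => ?_⟩
    by_cases hx : x ∈ tsupport
        (fun y : ℝ × EuclideanSpace ℝ (Fin d) => y.1 • fderiv ℝ (fderiv ℝ f) y)
    · exact (hC x hx).trans (le_max_left _ _)
    · have h0 := image_eq_zero_of_notMem_tsupport hx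
      rw [h0, ContinuousLinearMap.opNorm_zero]
      exact le_max_right _ _
  have hg1c : Continuous
      (fun y : ℝ × EuclideanSpace ℝ (Fin d) => y.1 • fderiv ℝ f y) :=
    continuous_fst.smul hc1
  have hg1s : HasCompactSupport
      (fun y : ℝ × EuclideanSpace ℝ (Fin d) => y.1 • fderiv ℝ f y) := by
    apply hs1.mono
    intro y hy
    simp only [Function.mem_support] at hy ⊢
    intro h0
    exact hy (by rw [h0, smul_zero])
  obtain ⟨Mg1, hMg1⟩ := hg1s.exists_bound_of_continuous hg1c
  have hgu : UniformContinuous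
      (fun y : ℝ × EuclideanSpace ℝ (Fin d) => y.1 • fderiv ℝ (fderiv ℝ f) y) :=
    hgs.uniformContinuous_of_continuous hgc
  have hM₂0 : 0 ≤ M₂ := le_trans (ContinuousLinearMap.opNorm_nonneg _) (hM₂ 0)
  have hM₁0 : 0 ≤ M₁ := le_trans (ContinuousLinearMap.opNorm_nonneg _) (hM₁ 0)
  have hMg0 : 0 ≤ Mg := le_trans (ContinuousLinearMap.opNorm_nonneg _) (hMg 0)
  have hMg10 : 0 ≤ Mg1 := le_trans (ContinuousLinearMap.opNorm_nonneg _) (hMg1 0)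
  rw [NormedAddCommGroup.tendsto_nhds_zero]
  intro ε' hε'
  set I' := ∫ ξ : ℝ × EuclideanSpace ℝ (Fin d), ‖ξ‖^2 ∂μ with hI'def
  have hI'0 : 0 ≤ I' := integral_nonneg (fun ξ => by positivity)
  set s := ε' / (4*(I'+1)) with hsdef
  have hs0 : 0 < s := by positivity
  obtain ⟨δ, hδ0, hδ⟩ : ∃ δ > 0, ∀ {a b : ℝ × EuclideanSpace ℝ (Fin d)}, dist a b < δ →
      dist (a.1 • fderiv ℝ (fderiv ℝ f) a) (b.1 • fderiv ℝ (fderiv ℝ f) b) < s :=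
    Metric.uniformContinuous_iff.1 (by exact hgu) s hs0
  set ε := min (δ/2) (ε' / (4*(M₂+1)*(I'+1))) with hεdef
  have hε0 : 0 < ε := lt_min (by positivity) (by positivity)
  have hεδ : ε < δ := lt_of_le_of_lt (min_le_left _ _) (by linarith)
  have hεle : ε ≤ ε' / (4*(M₂+1)*(I'+1)) := min_le_right _ _
  have hgb : ∀ a b : ℝ × EuclideanSpace ℝ (Fin d), dist a b < δ →
      ‖a.1 • fderiv ℝ (fderiv ℝ f) a - b.1 • fderiv ℝ (fderiv ℝ f) b‖ ≤ s := by
    intro a b hab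
    have := hδ hab
    rw [dist_eq_norm (a.1 • fderiv ℝ (fderiv ℝ f) a) (b.1 • fderiv ℝ (fderiv ℝ f) b)] at this
    exact this.le
  set C := 2*Mg1/ε + M₁ + Mg with hCdef
  have hC0 : 0 ≤ C :=
    add_nonneg (add_nonneg (div_nonneg (by linarith) hε0.le) hM₁0) hMg0
  have hmeas : ∀ θ : ℝ, MeasurableSet {ξ : ℝ × EuclideanSpace ℝ (Fin d) | ε*θ < ‖ξ‖} :=
    fun θ => measurableSet_lt measurable_const measurable_norm
  set T : ℝ → ℝ := fun θ => ∫ ξ, Set.indicator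
      {ξ : ℝ × EuclideanSpace ℝ (Fin d) | ε*θ < ‖ξ‖} (fun ξ => ‖ξ‖^2) ξ ∂μ with hTdef
  have hTint : ∀ θ : ℝ, Integrable (fun ξ : ℝ × EuclideanSpace ℝ (Fin d) =>
      Set.indicator {ξ : ℝ × EuclideanSpace ℝ (Fin d) | ε*θ < ‖ξ‖} (fun ξ => ‖ξ‖^2) ξ) μ :=
    fun θ => hint.indicator (hmeas θ)
  have hTnn : ∀ θ, 0 ≤ T θ := fun θ =>
    integral_nonneg (fun ξ => Set.indicator_nonneg (fun _ _ => by positivity) _)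
  have hTtend : Tendsto T atTop (𝓝 0) := by
    have h0 : (0:ℝ) = ∫ _ξ : ℝ × EuclideanSpace ℝ (Fin d), (0:ℝ) ∂μ := by simp
    rw [hTdef, h0]
    apply tendsto_integral_filter_of_dominated_convergence (fun ξ => ‖ξ‖^2)
    · exact Eventually.of_forall fun θ => (hTint θ).aestronglyMeasurable
    · apply Eventually.of_forall
      intro θ
      apply Eventually.of_forall
      intro ξ
      rw [Real.norm_eq_abs, abs_of_nonneg (Set.indicator_nonneg (fun _ _ => by positivity) _)]
      exact Set.indicator_le_self' (fun _ _ => by positivity) ξ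
    · exact hint
    · apply Eventually.of_forall
      intro ξ
      apply tendsto_const_nhds.congr'
      filter_upwards [eventually_gt_atTop (‖ξ‖/ε)] with θ hθ
      have hlt : ‖ξ‖ < ε*θ := by
        rw [mul_comm]
        exact (div_lt_iff₀ hε0).1 hθ
      exact (Set.indicator_of_notMem (by simp [not_lt.2 hlt.le]) _).symm
  have harith : (s + ε*M₂) * I' < ε' :=
    main_arith ε' I' M₂ s ε hε' hI'0 hM₂0 hsdef hεle hε0
  have hlim : Tendsto (fun θ => (s+ε*M₂)*I' + C*T θ) atTop (𝓝 ((s+ε*M₂)*I' + C*0)) :=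
    tendsto_const_nhds.add (hTtend.const_mul C)
  have hlt' : (s+ε*M₂)*I' + C*0 < ε' := by rw [mul_zero, add_zero]; exact harith
  filter_upwards [hlim.eventually_lt_const hlt', eventually_ge_atTop (1:ℝ)] with θ hθa hθb
  have hnn : (0:ℝ) ≤ ⨆ x : {x : ℝ × EuclideanSpace ℝ (Fin d) // 0 ≤ x.1},
      (x : ℝ × EuclideanSpace ℝ (Fin d)).1 *
      |∫ ξ, (f ((x : ℝ × EuclideanSpace ℝ (Fin d)) + θ⁻¹ • ξ)
          - f (x : ℝ × EuclideanSpace ℝ (Fin d))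
          - θ⁻¹ * fderiv ℝ f (x : ℝ × EuclideanSpace ℝ (Fin d)) ξ
          - (1 / 2) * θ⁻¹ ^ 2 *
              fderiv ℝ (fderiv ℝ f) (x : ℝ × EuclideanSpace ℝ (Fin d)) ξ ξ)
        * θ ^ 2 ∂μ| :=
    Real.iSup_nonneg (fun x => mul_nonneg x.2 (abs_nonneg _))
  rw [Real.norm_eq_abs, abs_of_nonneg hnn]
  refine lt_of_le_of_lt (Real.iSup_le (fun x => ?_) ?_) hθa
  swap
  · exact add_nonneg (mul_nonneg (add_nonneg hs0.le (mul_nonneg hε0.le hM₂0)) hI'0)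
      (mul_nonneg hC0 (hTnn θ))
  -- per-x bound
  have hx1 : (0:ℝ) ≤ (x : ℝ × EuclideanSpace ℝ (Fin d)).1 := x.2
  have hrw : (x : ℝ × EuclideanSpace ℝ (Fin d)).1 *
      |∫ ξ, (f ((x : ℝ × EuclideanSpace ℝ (Fin d)) + θ⁻¹ • ξ)
          - f (x : ℝ × EuclideanSpace ℝ (Fin d))
          - θ⁻¹ * fderiv ℝ f (x : ℝ × EuclideanSpace ℝ (Fin d)) ξ
          - (1 / 2) * θ⁻¹ ^ 2 *
              fderiv ℝ (fderiv ℝ f) (x : ℝ × EuclideanSpace ℝ (Fin d)) ξ ξ)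
        * θ ^ 2 ∂μ|
      = |∫ ξ, (x : ℝ × EuclideanSpace ℝ (Fin d)).1 *
          ((f ((x : ℝ × EuclideanSpace ℝ (Fin d)) + θ⁻¹ • ξ)
          - f (x : ℝ × EuclideanSpace ℝ (Fin d))
          - θ⁻¹ * fderiv ℝ f (x : ℝ × EuclideanSpace ℝ (Fin d)) ξ
          - (1 / 2) * θ⁻¹ ^ 2 *
              fderiv ℝ (fderiv ℝ f) (x : ℝ × EuclideanSpace ℝ (Fin d)) ξ ξ)
        * θ ^ 2) ∂μ| := by
    rw [integral_const_mul, abs_mul, abs_of_nonneg hx1]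
  rw [hrw]
  have hptwise : ∀ ξ : ℝ × EuclideanSpace ℝ (Fin d),
      ‖(x : ℝ × EuclideanSpace ℝ (Fin d)).1 *
          ((f ((x : ℝ × EuclideanSpace ℝ (Fin d)) + θ⁻¹ • ξ)
          - f (x : ℝ × EuclideanSpace ℝ (Fin d))
          - θ⁻¹ * fderiv ℝ f (x : ℝ × EuclideanSpace ℝ (Fin d)) ξ
          - (1 / 2) * θ⁻¹ ^ 2 *
              fderiv ℝ (fderiv ℝ f) (x : ℝ × EuclideanSpace ℝ (Fin d)) ξ ξ)
        * θ ^ 2)‖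
      ≤ (s + ε*M₂) * ‖ξ‖^2 + C * Set.indicator
          {ξ : ℝ × EuclideanSpace ℝ (Fin d) | ε*θ < ‖ξ‖} (fun ξ => ‖ξ‖^2) ξ := by
    intro ξ
    rw [Real.norm_eq_abs]
    have := pointwise_bound f (fderiv ℝ f) (fderiv ℝ (fderiv ℝ f))
      (line_d1 f hf) (line_d2 f hf) hM₁ hM₂ hMg hMg1 hgb hε0 hεδ hθb
      (x : ℝ × EuclideanSpace ℝ (Fin d)) ξ
    calc _ ≤ (s + ε*M₂) * ‖ξ‖^2 + (2*Mg1/ε + M₁ + Mg) * Set.indicator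
          {ξ : ℝ × EuclideanSpace ℝ (Fin d) | ε*θ < ‖ξ‖} (fun ξ => ‖ξ‖^2) ξ := this
      _ = _ := by rw [hCdef]
  have hBint : Integrable (fun ξ : ℝ × EuclideanSpace ℝ (Fin d) =>
      (s + ε*M₂) * ‖ξ‖^2 + C * Set.indicator
        {ξ : ℝ × EuclideanSpace ℝ (Fin d) | ε*θ < ‖ξ‖} (fun ξ => ‖ξ‖^2) ξ) μ :=
    (hint.const_mul _).add ((hTint θ).const_mul _)
  have hle := norm_integral_le_of_norm_le hBint (Eventually.of_forall hptwise)
  rw [Real.norm_eq_abs] at hle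
  calc |∫ ξ, (x : ℝ × EuclideanSpace ℝ (Fin d)).1 *
          ((f ((x : ℝ × EuclideanSpace ℝ (Fin d)) + θ⁻¹ • ξ)
          - f (x : ℝ × EuclideanSpace ℝ (Fin d))
          - θ⁻¹ * fderiv ℝ f (x : ℝ × EuclideanSpace ℝ (Fin d)) ξ
          - (1 / 2) * θ⁻¹ ^ 2 *
              fderiv ℝ (fderiv ℝ f) (x : ℝ × EuclideanSpace ℝ (Fin d)) ξ ξ)
        * θ ^ 2) ∂μ|
      ≤ ∫ ξ, ((s + ε*M₂) * ‖ξ‖^2 + C * Set.indicator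
          {ξ : ℝ × EuclideanSpace ℝ (Fin d) | ε*θ < ‖ξ‖} (fun ξ => ‖ξ‖^2) ξ) ∂μ := hle
    _ = (s + ε*M₂)*I' + C*T θ := by
        rw [integral_add (hint.const_mul _) ((hTint θ).const_mul _),
          integral_const_mul, integral_const_mul]
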